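/- Let A = E₁₂ and B = E₁₁ be the 2×2 complex matrices with a single entry 1 in position (1,2) and (1,1) respectively, and zeros elsewhere. For every n ≥ 1 and every word w ∈ W_n, F(w) is the 2×2 matrix with entries F(w)₁₁ = e, F(w)₁₂ = (1/n)·(e^{h₁(w)/n} + e^{h₂(w)/n} + … + e^{h_n(w)/n}), F(w)₂₁ = 0, and F(w)₂₂ = 1, where h_i(w) denotes the number of B's appearing in w before the i-th A. -/

import Mathlib

/-- The number of occurrences of the letter `b` (A = `true`, B = `false`) among the first
`j` letters of the word `w`. -/
def countLetter (m : ℕ) (w : Fin m → Bool) (b : Bool) (j : ℕ) : ℕ :=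
  (Finset.univ.filter fun i : Fin m => (i : ℕ) < j ∧ w i = b).card

/-- `w` is a word in `W_n`: a word of length `2n` in the letters A (`true`) and B (`false`)
containing exactly `n` A's (and hence exactly `n` B's). -/
def IsWord (n : ℕ) (w : Fin (2 * n) → Bool) : Prop :=
  (Finset.univ.filter fun i : Fin (2 * n) => w i = true).card = n

/-- `F(w) = exp(w[1]/n) ⬝ exp(w[2]/n) ⋯ exp(w[2n]/n)`, the ordered product of matrix
exponentials, where the letter A (`true`) is replaced by the matrix `A/n` and the letter
B (`false`) by `B/n`. -/
noncomputable def F (A B : Matrix (Fin 2) (Fin 2) ℂ) (n : ℕ)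
    (w : Fin (2 * n) → Bool) : Matrix (Fin 2) (Fin 2) ℂ :=
  (List.ofFn fun i : Fin (2 * n) =>
    NormedSpace.exp ((n : ℂ)⁻¹ • (if w i then A else B))).prod

/-- For `A = E₁₂` and `B = E₁₁` in `M₂(ℂ)` and any word `w ∈ W_n`,
`F(w) = !![e, (1/n)·Σᵢ e^{hᵢ(w)/n}; 0, 1]`, where `h_i(w)` is the number of B's appearing
in `w` before the `i`-th A. Here the sum `Σ_{i=1}^n e^{h_i(w)/n}` is written, reindexing
each `i` by the position of the `i`-th A, as the sum over the positions `k` carrying the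
letter A of `e^{(number of B's before position k)/n}`. -/
lemma exp_smul_E01 (c : ℂ) :
    NormedSpace.exp (c • Matrix.single (0:Fin 2) (1:Fin 2) (1:ℂ)) = !![1, c; 0, 1] := by
  set M := c • Matrix.single (0:Fin 2) (1:Fin 2) (1:ℂ) with hM
  have hM2 : M ^ 2 = 0 := by
    ext i j
    fin_cases i <;> fin_cases j <;>
      simp [hM, pow_two, Matrix.mul_apply, Fin.sum_univ_two, Matrix.single]
  have hvanish : ∀ k ∉ Finset.range 2, ((Nat.factorial k : ℂ))⁻¹ • M ^ k = 0 := by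
    intro k hk
    rw [Finset.mem_range, not_lt] at hk
    rw [pow_eq_zero_of_le hk hM2, smul_zero]
  simp only [NormedSpace.exp_eq_tsum (𝕂 := ℂ)]
  rw [tsum_eq_sum hvanish]
  rw [Finset.sum_range_succ, Finset.sum_range_one]
  ext i j
  fin_cases i <;> fin_cases j <;>
    simp [hM, Matrix.one_apply, Matrix.single]

lemma exp_smul_E00 (c : ℂ) :
    NormedSpace.exp (c • Matrix.single (0:Fin 2) (0:Fin 2) (1:ℂ)) =
      !![Complex.exp c, 0; 0, 1] := by
  have h : c • Matrix.single (0:Fin 2) (0:Fin 2) (1:ℂ) = Matrix.diagonal ![c, 0] := by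
    ext i j
    fin_cases i <;> fin_cases j <;> simp [Matrix.diagonal, Matrix.single]
  rw [h, Matrix.exp_diagonal]
  ext i j
  fin_cases i <;> fin_cases j <;>
    simp [Matrix.diagonal, Pi.coe_exp, NormedSpace.exp_zero, ← Complex.exp_eq_exp_ℂ]

lemma tri_prod (l : List (ℂ × ℂ)) :
    (l.map fun p => (!![p.1, p.2; 0, 1] : Matrix (Fin 2) (Fin 2) ℂ)).prod =
      !![(l.map Prod.fst).prod, l.foldr (fun p acc => p.2 + p.1 * acc) 0; 0, 1] := by
  induction l with
  | nil =>
      simp only [List.map_nil, List.prod_nil, List.foldr_nil]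
      ext i j
      fin_cases i <;> fin_cases j <;> simp [Matrix.one_apply]
  | cons p t ih =>
      simp only [List.map_cons, List.prod_cons, ih, List.foldr_cons]
      ext i j
      fin_cases i <;> fin_cases j <;>
        simp [Matrix.mul_apply, Fin.sum_univ_two, add_comm]

lemma foldr_ofFn (m : ℕ) (f : Fin m → ℂ × ℂ) :
    (List.ofFn f).foldr (fun p acc => p.2 + p.1 * acc) 0 =
      ∑ i : Fin m, (∏ j ∈ Finset.univ.filter fun j : Fin m => (j:ℕ) < (i:ℕ), (f j).1) * (f i).2 := by
  induction m with
  | zero => simp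
  | succ m ih =>
      rw [List.ofFn_succ, List.foldr_cons, ih, Fin.sum_univ_succ]
      have h0 : (Finset.univ.filter fun j : Fin (m+1) => (j:ℕ) < ((0 : Fin (m+1)):ℕ)) = ∅ := by
        simp
      rw [h0]
      simp only [Finset.prod_empty, one_mul]
      congr 1
      rw [Finset.mul_sum]
      refine Finset.sum_congr rfl fun i _ => ?_
      rw [← mul_assoc]
      congr 1
      rw [Finset.prod_filter, Finset.prod_filter, Fin.prod_univ_succ]
      simp [Fin.val_succ, Nat.succ_lt_succ_iff]
theorem F_stdBasis_eq (n : ℕ) (hn : 1 ≤ n) (w : Fin (2 * n) → Bool) (hw : IsWord n w) :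
    F (Matrix.single 0 1 (1 : ℂ)) (Matrix.single 0 0 (1 : ℂ)) n w =
      !![(Real.exp 1 : ℂ),
          (((1 / (n : ℝ)) * ∑ k ∈ Finset.univ.filter (fun k : Fin (2 * n) => w k = true),
            Real.exp ((countLetter (2 * n) w false (k : ℕ) : ℝ) / n) : ℝ) : ℂ);
        0, 1] := by
  classical
  have hn0 : (n : ℂ) ≠ 0 := Nat.cast_ne_zero.mpr (by omega)
  set E : ℂ := Complex.exp ((n:ℂ)⁻¹) with hE
  set a : Fin (2*n) → ℂ := fun i => if w i then 1 else E with ha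
  set b : Fin (2*n) → ℂ := fun i => if w i then (n:ℂ)⁻¹ else 0 with hb
  have hfac : ∀ i : Fin (2*n),
      NormedSpace.exp ((n:ℂ)⁻¹ •
        (if w i then Matrix.single (0:Fin 2) (1:Fin 2) (1:ℂ)
         else Matrix.single (0:Fin 2) (0:Fin 2) (1:ℂ))) = !![a i, b i; 0, 1] := by
    intro i
    cases hwi : w i
    · simp only [hwi, if_false, ha, hb, Bool.false_eq_true]
      rw [exp_smul_E00]
    · simp only [hwi, if_true, ha, hb]
      rw [exp_smul_E01]
  have key : F (Matrix.single 0 1 (1 : ℂ)) (Matrix.single 0 0 (1 : ℂ)) n w =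
      !![∏ i, a i,
         ∑ i : Fin (2*n), (∏ j ∈ Finset.univ.filter fun j : Fin (2*n) => (j:ℕ) < (i:ℕ), a j) * b i;
         0, 1] := by
    unfold F
    have h1 : (List.ofFn fun i : Fin (2*n) =>
        NormedSpace.exp ((n:ℂ)⁻¹ •
          (if w i then Matrix.single (0:Fin 2) (1:Fin 2) (1:ℂ)
           else Matrix.single (0:Fin 2) (0:Fin 2) (1:ℂ)))) =
        (List.ofFn fun i : Fin (2*n) => ((a i, b i) : ℂ × ℂ)).map
          (fun p => !![p.1, p.2; 0, 1]) := by
      rw [List.map_ofFn]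
      exact congrArg List.ofFn (funext fun i => (hfac i).symm) |>.symm
    rw [h1, tri_prod, List.map_ofFn, foldr_ofFn]
    simp only [Function.comp]
    rw [List.prod_ofFn]
    rfl
  rw [key]
  -- the number of B's is n
  have hcard : (Finset.univ.filter fun i : Fin (2*n) => w i = false).card = n := by
    have h := Finset.card_filter_add_card_filter_not
      (s := (Finset.univ : Finset (Fin (2*n)))) (p := fun i => w i = true)
    simp only [Bool.not_eq_true, Finset.card_univ, Fintype.card_fin] at h
    unfold IsWord at hw
    omega
  have hprod : ∏ i, a i = (Real.exp 1 : ℂ) := by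
    have : ∏ i, a i = ∏ i ∈ Finset.univ.filter fun i : Fin (2*n) => w i = false, E := by
      rw [Finset.prod_filter]
      refine Finset.prod_congr rfl fun i _ => ?_
      cases hwi : w i <;> simp [ha, hwi]
    rw [this, Finset.prod_const, hcard, hE, ← Complex.exp_nat_mul,
      mul_inv_cancel₀ hn0]
    rw [Complex.ofReal_exp, Complex.ofReal_one]
  have hpow : ∀ i : Fin (2*n),
      (∏ j ∈ Finset.univ.filter fun j : Fin (2*n) => (j:ℕ) < (i:ℕ), a j) =
        E ^ countLetter (2*n) w false (i:ℕ) := by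
    intro i
    have h2 : (∏ j ∈ Finset.univ.filter fun j : Fin (2*n) => (j:ℕ) < (i:ℕ), a j) =
        ∏ j ∈ Finset.univ.filter fun j : Fin (2*n) => (j:ℕ) < (i:ℕ),
          (if w j = false then E else 1) :=
      Finset.prod_congr rfl fun j _ => by cases hwj : w j <;> simp [ha, hwj]
    rw [h2, ← Finset.prod_filter, Finset.prod_const, Finset.filter_filter]
    simp [countLetter]
  have hsum : (∑ i : Fin (2*n),
      (∏ j ∈ Finset.univ.filter fun j : Fin (2*n) => (j:ℕ) < (i:ℕ), a j) * b i) =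
      (((1 / (n : ℝ)) * ∑ k ∈ Finset.univ.filter (fun k : Fin (2 * n) => w k = true),
            Real.exp ((countLetter (2 * n) w false (k : ℕ) : ℝ) / n) : ℝ) : ℂ) := by
    push_cast
    rw [Finset.mul_sum, Finset.sum_filter]
    refine Finset.sum_congr rfl fun i _ => ?_
    rw [hpow]
    cases hwi : w i
    · simp [hb, hwi]
    · simp only [hb, hwi, if_true]
      rw [hE, ← Complex.exp_nat_mul, div_eq_mul_inv]
      ring
  rw [hprod, hsum]
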